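/- The function y(x) = 2^{1/4}·√(x(1−x)) satisfies the autonomous ODE y''(x) + (1/2)·y(x)^{−3} = 0 for all x ∈ (0,1), together with the boundary conditions y(0) = y(1) = 0. -/

import Mathlib

noncomputable def yHalf (x : ℝ) : ℝ := (2 : ℝ) ^ ((1 : ℝ) / 4) * Real.sqrt (x * (1 - x))

open Real Set

noncomputable def gHalf (x : ℝ) : ℝ :=
  (2 : ℝ) ^ ((1 : ℝ) / 4) * (1 / (2 * Real.sqrt (x * (1 - x))) * (1 - 2 * x))

lemma u_hasDerivAt (x : ℝ) : HasDerivAt (fun x : ℝ => x * (1 - x)) (1 - 2 * x) x := by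
  have h := (hasDerivAt_id x).mul ((hasDerivAt_const x (1:ℝ)).sub (hasDerivAt_id x))
  have he : (1 : ℝ) - 2 * x = 1 * (1 - x) + x * (0 - 1) := by ring
  rw [he]
  exact h

lemma sqrt_u_hasDerivAt {x : ℝ} (hx : x ∈ Set.Ioo (0:ℝ) 1) :
    HasDerivAt (fun x : ℝ => Real.sqrt (x * (1 - x)))
      (1 / (2 * Real.sqrt (x * (1 - x))) * (1 - 2 * x)) x := by
  have hu : (0:ℝ) < x * (1 - x) := mul_pos hx.1 (by linarith [hx.2])
  exact (Real.hasDerivAt_sqrt (ne_of_gt hu)).comp x (u_hasDerivAt x)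

lemma yHalf_hasDerivAt {x : ℝ} (hx : x ∈ Set.Ioo (0:ℝ) 1) :
    HasDerivAt yHalf (gHalf x) x :=
  (sqrt_u_hasDerivAt hx).const_mul _

theorem ode_p_half :
    (∀ x ∈ Set.Ioo (0 : ℝ) 1,
      deriv (deriv yHalf) x + (1 / 2) * (yHalf x) ^ (-3 : ℤ) = 0) ∧
    yHalf 0 = 0 ∧ yHalf 1 = 0 := by
  refine ⟨?_, by simp [yHalf], by simp [yHalf]⟩
  intro x hx
  set c : ℝ := (2 : ℝ) ^ ((1 : ℝ) / 4) with hc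
  have hcpos : 0 < c := Real.rpow_pos_of_pos (by norm_num) _
  have hc4 : c ^ (4:ℕ) = 2 := by
    rw [hc, ← Real.rpow_natCast ((2:ℝ) ^ ((1:ℝ)/4)) 4, ← Real.rpow_mul (by norm_num)]
    norm_num
  have hu : (0:ℝ) < x * (1 - x) := mul_pos hx.1 (by linarith [hx.2])
  set s : ℝ := Real.sqrt (x * (1 - x)) with hsdef
  have hspos : 0 < s := Real.sqrt_pos.mpr hu
  have hs2 : s ^ 2 = x * (1 - x) := Real.sq_sqrt hu.le
  -- deriv yHalf = gHalf near x
  have hev : deriv yHalf =ᶠ[nhds x] gHalf := by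
    filter_upwards [isOpen_Ioo.mem_nhds hx] with t ht
    exact (yHalf_hasDerivAt ht).deriv
  have h1 : deriv (deriv yHalf) x = deriv gHalf x := hev.deriv_eq
  -- compute deriv gHalf x
  have hsne : s ≠ 0 := hspos.ne'
  have hd : HasDerivAt (fun x : ℝ => 2 * Real.sqrt (x * (1 - x)))
      (2 * (1 / (2 * s) * (1 - 2 * x))) x := (sqrt_u_hasDerivAt hx).const_mul 2
  have hdne : 2 * s ≠ 0 := by positivity
  have hinv : HasDerivAt (fun x : ℝ => 1 / (2 * Real.sqrt (x * (1 - x))))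
      ((0 * (2 * s) - 1 * (2 * (1 / (2 * s) * (1 - 2 * x)))) / (2 * s) ^ 2) x :=
    (hasDerivAt_const x (1:ℝ)).div hd hdne
  have hlin : HasDerivAt (fun x : ℝ => 1 - 2 * x) (0 - 2 * 1) x :=
    (hasDerivAt_const x (1:ℝ)).sub ((hasDerivAt_id x).const_mul 2)
  have hg : HasDerivAt gHalf
      (c * ((0 * (2 * s) - 1 * (2 * (1 / (2 * s) * (1 - 2 * x)))) / (2 * s) ^ 2 * (1 - 2 * x)
        + 1 / (2 * s) * (0 - 2 * 1))) x := (hinv.mul hlin).const_mul c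
  have h2 : deriv gHalf x = c * ((0 * (2 * s) - 1 * (2 * (1 / (2 * s) * (1 - 2 * x)))) / (2 * s) ^ 2 * (1 - 2 * x)
        + 1 / (2 * s) * (0 - 2 * 1)) := hg.deriv
  have hy : yHalf x = c * s := rfl
  have hzpow : (yHalf x) ^ (-3 : ℤ) = 1 / (c * s) ^ 3 := by
    rw [hy, zpow_neg, zpow_ofNat]
    simp
  have hcne : c ≠ 0 := hcpos.ne'
  have key : c * ((0 * (2 * s) - 1 * (2 * (1 / (2 * s) * (1 - 2 * x)))) / (2 * s) ^ 2 * (1 - 2 * x)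
        + 1 / (2 * s) * (0 - 2 * 1)) = -c / (4 * s ^ 3) := by
    field_simp
    linear_combination (-16) * hs2
  rw [h1, h2, hzpow, key]
  field_simp
  linear_combination (-2) * hc4
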